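/- Let $\varepsilon$ be a real number with $|\varepsilon|<1$ and let $v:[0,1]\to\mathbb{R}$ be twice continuously differentiable with $v(0)=v(1)=0$. Then $$\int_0^1\bigl(-v''(x)+\varepsilon\,v''(1-x)\bigr)v(x)\,dx\;\geq\;(1-|\varepsilon|)\int_0^1 \bigl(v'(x)\bigr)^2\,dx.$$ -/

import Mathlib

open Real MeasureTheory

/-- Gradient lower bound for the differential operator with involution
`L[v](x) = -v''(x) + ε v''(1-x)` under Dirichlet conditions `v(0) = v(1) = 0`. -/
theorem involution_operator_gradient_bound (ε : ℝ) (hε : |ε| < 1)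
    (v v' v'' : ℝ → ℝ)
    (hv' : ∀ x ∈ Set.Icc (0:ℝ) 1, HasDerivAt v (v' x) x)
    (hv'' : ∀ x ∈ Set.Icc (0:ℝ) 1, HasDerivAt v' (v'' x) x)
    (hv''cont : ContinuousOn v'' (Set.Icc (0:ℝ) 1))
    (hv0 : v 0 = 0) (hv1 : v 1 = 0) :
    (1 - |ε|) * ∫ x in (0:ℝ)..1, (v' x) ^ 2
      ≤ ∫ x in (0:ℝ)..1, (-(v'' x) + ε * v'' (1 - x)) * v x := by
  have huIcc : Set.uIcc (0:ℝ) 1 = Set.Icc 0 1 := Set.uIcc_of_le zero_le_one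
  have hmap : ∀ x ∈ Set.Icc (0:ℝ) 1, (1 - x) ∈ Set.Icc (0:ℝ) 1 := by
    intro x hx
    exact ⟨by linarith [hx.2], by linarith [hx.1]⟩
  have hv'cont : ContinuousOn v' (Set.Icc (0:ℝ) 1) := fun x hx =>
    (hv'' x hx).continuousAt.continuousWithinAt
  have hvcont : ContinuousOn v (Set.Icc (0:ℝ) 1) := fun x hx =>
    (hv' x hx).continuousAt.continuousWithinAt
  -- derivative of x ↦ -v'(1-x) is v''(1-x)
  have hw' : ∀ x ∈ Set.Icc (0:ℝ) 1,
      HasDerivAt (fun y => -v' (1 - y)) (v'' (1 - x)) x := by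
    intro x hx
    have h1 : HasDerivAt (fun y : ℝ => 1 - y) (-1) x := by
      exact (hasDerivAt_id' x).const_sub 1
    have h2 := ((hv'' (1 - x) (hmap x hx)).comp x h1).neg
    rw [show v'' (1 - x) = -(v'' (1 - x) * -1) by ring]; exact h2
  -- continuity / integrability
  have hcontsub : ContinuousOn (fun x : ℝ => 1 - x) (Set.Icc (0:ℝ) 1) :=
    (continuous_const.sub continuous_id).continuousOn
  have hv''c2 : ContinuousOn (fun x => v'' (1 - x)) (Set.Icc (0:ℝ) 1) :=
    hv''cont.comp hcontsub hmap
  have hv'c2 : ContinuousOn (fun x => v' (1 - x)) (Set.Icc (0:ℝ) 1) :=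
    hv'cont.comp hcontsub hmap
  have hic : ∀ {f : ℝ → ℝ}, ContinuousOn f (Set.Icc (0:ℝ) 1) →
      IntervalIntegrable f volume 0 1 := fun h =>
    (h.mono (le_of_eq huIcc)).intervalIntegrable
  have int_v'' : IntervalIntegrable v'' volume 0 1 := hic hv''cont
  have int_v''2 : IntervalIntegrable (fun x => v'' (1 - x)) volume 0 1 := hic hv''c2
  have int_v' : IntervalIntegrable v' volume 0 1 := hic hv'cont
  have int_sq : IntervalIntegrable (fun x => (v' x) ^ 2) volume 0 1 := hic (hv'cont.pow 2)
  have int_prod : IntervalIntegrable (fun x => v' x * v' (1 - x)) volume 0 1 :=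
    hic (hv'cont.mul hv'c2)
  have int_sq2 : IntervalIntegrable (fun x => (v' (1 - x)) ^ 2) volume 0 1 :=
    hic (hv'c2.pow 2)
  set I : ℝ := ∫ x in (0:ℝ)..1, (v' x) ^ 2 with hI
  set J : ℝ := ∫ x in (0:ℝ)..1, v' x * v' (1 - x) with hJ
  -- integration by parts 1 : ∫ v * v'' = - I
  have parts1 : (∫ x in (0:ℝ)..1, v x * v'' x) = -I := by
    have h := intervalIntegral.integral_mul_deriv_eq_deriv_mul
      (u := v) (v := v') (u' := v') (v' := v'') (a := 0) (b := 1)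
      (fun x hx => hv' x (huIcc ▸ hx)) (fun x hx => hv'' x (huIcc ▸ hx))
      int_v' int_v''
    rw [h, hv0, hv1]
    have : (∫ x in (0:ℝ)..1, v' x * v' x) = I :=
      intervalIntegral.integral_congr (fun x _ => (sq (v' x)).symm)
    rw [this]; ring
  -- integration by parts 2 : ∫ v * v''(1-x) = J
  have parts2 : (∫ x in (0:ℝ)..1, v x * v'' (1 - x)) = J := by
    have h := intervalIntegral.integral_mul_deriv_eq_deriv_mul
      (u := v) (v := fun y => -v' (1 - y)) (u' := v')
      (v' := fun x => v'' (1 - x)) (a := 0) (b := 1)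
      (fun x hx => hv' x (huIcc ▸ hx)) (fun x hx => hw' x (huIcc ▸ hx))
      int_v' int_v''2
    rw [h, hv0, hv1]
    have : (∫ x in (0:ℝ)..1, v' x * -v' (1 - x))
        = - ∫ x in (0:ℝ)..1, v' x * v' (1 - x) := by
      rw [← intervalIntegral.integral_neg]
      exact intervalIntegral.integral_congr (fun x _ => by ring)
    rw [this]; ring
  -- symmetry : ∫ v'(1-x)^2 = I
  have hsym : (∫ x in (0:ℝ)..1, (v' (1 - x)) ^ 2) = I := by
    have := intervalIntegral.integral_comp_sub_left (a := (0:ℝ)) (b := 1)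
      (fun x => (v' x) ^ 2) 1
    simpa using this
  -- I ≥ 0
  have hI0 : 0 ≤ I := by
    apply intervalIntegral.integral_nonneg zero_le_one
    intro x _; positivity
  -- |J| ≤ I
  have hJle : |J| ≤ I := by
    have hub : J ≤ I := by
      have h1 : J ≤ ∫ x in (0:ℝ)..1, ((v' x) ^ 2 + (v' (1 - x)) ^ 2) / 2 := by
        apply intervalIntegral.integral_mono_on zero_le_one int_prod
          ((int_sq.add int_sq2).div_const 2)
        intro x _
        nlinarith [sq_nonneg (v' x - v' (1 - x))]
      have h2 : (∫ x in (0:ℝ)..1, ((v' x) ^ 2 + (v' (1 - x)) ^ 2) / 2) = I := by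
        rw [intervalIntegral.integral_div, intervalIntegral.integral_add int_sq int_sq2,
          hsym]
        ring
      linarith
    have hlb : -J ≤ I := by
      have h1 : (∫ x in (0:ℝ)..1, -(v' x * v' (1 - x)))
          ≤ ∫ x in (0:ℝ)..1, ((v' x) ^ 2 + (v' (1 - x)) ^ 2) / 2 := by
        apply intervalIntegral.integral_mono_on zero_le_one
          (hic ((hv'cont.mul hv'c2).neg))
          ((int_sq.add int_sq2).div_const 2)
        intro x _
        simp only [Pi.neg_apply, Pi.mul_apply]
        nlinarith [sq_nonneg (v' x + v' (1 - x))]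
      have h2 : (∫ x in (0:ℝ)..1, ((v' x) ^ 2 + (v' (1 - x)) ^ 2) / 2) = I := by
        rw [intervalIntegral.integral_div, intervalIntegral.integral_add int_sq int_sq2,
          hsym]
        ring
      rw [intervalIntegral.integral_neg] at h1
      linarith
    exact abs_le.mpr ⟨by linarith, hub⟩
  -- split the RHS integral
  have hsplit : (∫ x in (0:ℝ)..1, (-(v'' x) + ε * v'' (1 - x)) * v x) = I + ε * J := by
    have heq : ∀ x ∈ Set.uIcc (0:ℝ) 1,
        (-(v'' x) + ε * v'' (1 - x)) * v x
          = -(v x * v'' x) + ε * (v x * v'' (1 - x)) := fun x _ => by ring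
    rw [intervalIntegral.integral_congr heq]
    have intA : IntervalIntegrable (fun x => v x * v'' x) volume 0 1 :=
      hic (hvcont.mul hv''cont)
    have intB : IntervalIntegrable (fun x => v x * v'' (1 - x)) volume 0 1 :=
      hic (hvcont.mul hv''c2)
    have intA' : IntervalIntegrable (fun x => -(v x * v'' x)) volume 0 1 :=
      hic ((hvcont.mul hv''cont).neg)
    rw [intervalIntegral.integral_add intA' (intB.const_mul ε),
      intervalIntegral.integral_neg, intervalIntegral.integral_const_mul,
      parts1, parts2]
    ring
  rw [hsplit]
  have : -(|ε| * I) ≤ ε * J := by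
    calc -(|ε| * I) ≤ -(|ε| * |J|) := by
            have := mul_le_mul_of_nonneg_left hJle (abs_nonneg ε)
            linarith
      _ ≤ -|ε * J| := by rw [abs_mul]
      _ ≤ ε * J := neg_abs_le _
  nlinarith
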